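/- Let P be the bilinear interpolant determined by Δx > 0, Δy > 0 and corner values Q11, Q21, Q12, Q22, let m ≥ 1 be a natural number, set h = Δy/m, and let y_j = (j − 1/2)·h for j = 1,…,m be the fine-grid face midpoints along a vertical coarse-cell face. Then the discrete sum of the x-fluxes over the m fine faces satisfies ∑_{j=1}^{m} (∂P/∂x)(x, y_j) · h = ((Q21 − Q11) + (Q22 − Q12)) · Δy / (2·Δx), for every x. -/

import Mathlib

/-- The bilinear interpolant on the rectangle `[0, Δx] × [0, Δy]` with corner values
`Q11, Q21, Q12, Q22`. -/
noncomputable def bilerp (Δx Δy Q11 Q21 Q12 Q22 : ℝ) : ℝ × ℝ → ℝ :=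
  fun p =>
    (1 / (Δx * Δy)) *
      (Q11 * (Δx - p.1) * (Δy - p.2) + Q21 * p.1 * (Δy - p.2) +
        Q12 * (Δx - p.1) * p.2 + Q22 * p.1 * p.2)

/-- The discrete sum of the interpolated `x`-fluxes over the `m` fine faces lying on a
vertical coarse-cell face equals `((Q21 − Q11) + (Q22 − Q12)) · Δy / (2·Δx)`,
for every `x`. Here `h = Δy/m` and `y_j = (j − 1/2)·h` are the fine-face midpoints. -/
theorem bilerp_face_flux_sum (Δx Δy Q11 Q21 Q12 Q22 : ℝ) (hΔx : 0 < Δx) (hΔy : 0 < Δy)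
    (m : ℕ) (hm : 1 ≤ m) (h : ℝ) (hh : h = Δy / m) :
    ∀ x : ℝ,
      (∑ j ∈ Finset.Icc 1 m,
          deriv (fun t => bilerp Δx Δy Q11 Q21 Q12 Q22 (t, ((j : ℝ) - 1 / 2) * h)) x * h) =
        ((Q21 - Q11) + (Q22 - Q12)) * Δy / (2 * Δx) := by
  intro x
  have hΔx0 : Δx ≠ 0 := ne_of_gt hΔx
  have hΔy0 : Δy ≠ 0 := ne_of_gt hΔy
  have hm0 : (m : ℝ) ≠ 0 := Nat.cast_ne_zero.mpr (by omega)
  have key : ∀ y : ℝ, deriv (fun t => bilerp Δx Δy Q11 Q21 Q12 Q22 (t, y)) x =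
      (1 / (Δx * Δy)) * ((Q21 - Q11) * (Δy - y) + (Q22 - Q12) * y) := by
    intro y
    have hfun : (fun t => bilerp Δx Δy Q11 Q21 Q12 Q22 (t, y)) =
        fun t => ((1 / (Δx * Δy)) * ((Q21 - Q11) * (Δy - y) + (Q22 - Q12) * y)) * t +
          (1 / (Δx * Δy)) * (Q11 * Δx * (Δy - y) + Q12 * Δx * y) := by
      funext t
      simp only [bilerp]
      ring
    rw [hfun]
    have hd : HasDerivAt
        (fun t : ℝ => ((1 / (Δx * Δy)) * ((Q21 - Q11) * (Δy - y) + (Q22 - Q12) * y)) * t +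
          (1 / (Δx * Δy)) * (Q11 * Δx * (Δy - y) + Q12 * Δx * y))
        ((1 / (Δx * Δy)) * ((Q21 - Q11) * (Δy - y) + (Q22 - Q12) * y)) x := by
      simpa using ((hasDerivAt_id x).const_mul
        ((1 / (Δx * Δy)) * ((Q21 - Q11) * (Δy - y) + (Q22 - Q12) * y))).add_const
        ((1 / (Δx * Δy)) * (Q11 * Δx * (Δy - y) + Q12 * Δx * y))
    exact hd.deriv
  simp only [key]
  have hsum : (∑ j ∈ Finset.Icc 1 m, (j : ℝ)) = m * (m + 1) / 2 := by
    clear hm hh hm0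
    induction m with
    | zero => simp
    | succ n ih =>
      rw [Finset.sum_Icc_succ_top (by omega)]
      push_cast
      rw [ih]
      ring
  have expand : ∀ j ∈ Finset.Icc 1 m,
      (1 / (Δx * Δy)) * ((Q21 - Q11) * (Δy - ((j : ℝ) - 1 / 2) * h) +
        (Q22 - Q12) * (((j : ℝ) - 1 / 2) * h)) * h =
      ((1 / (Δx * Δy)) * ((Q21 - Q11) * (Δy + h / 2) - (Q22 - Q12) * (h / 2)) * h) +
        ((1 / (Δx * Δy)) * ((Q22 - Q12) - (Q21 - Q11)) * h * h) * (j : ℝ) := by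
    intro j _
    ring
  rw [Finset.sum_congr rfl expand, Finset.sum_add_distrib, Finset.sum_const,
    ← Finset.mul_sum, hsum]
  have hcard : (Finset.Icc 1 m).card = m := by simp
  rw [hcard, hh]
  field_simp
  ring_nf
  field_simp
  ring
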